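/- For any nested canalizing function f, as(f) ≤ 5/3 - |f̂(∅)|. -/

import Mathlib

open Finset

/-- Sign encoding of a Boolean value: `true ↦ 1`, `false ↦ -1`. -/
def bsign (a : Bool) : ℝ := if a then 1 else -1

/-- The character `χ_U(x) = ∏_{i ∈ U} x_i` (inputs encoded as Booleans). -/
def chi {n : ℕ} (U : Finset (Fin n)) (x : Fin n → Bool) : ℝ :=
  ∏ i ∈ U, bsign (x i)

/-- Fourier coefficient `f̂(U) = 2^{-n} ∑_x f(x) χ_U(x)`. -/
noncomputable def fhat {n : ℕ} (f : (Fin n → Bool) → ℝ) (U : Finset (Fin n)) : ℝ :=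
  (∑ x : Fin n → Bool, f x * chi U x) / 2 ^ n

/-- `f` is a (±1-valued) Boolean function. -/
def IsBoolean {n : ℕ} (f : (Fin n → Bool) → ℝ) : Prop := ∀ x, f x = 1 ∨ f x = -1

/-- Restriction `f^{(i,a)}` of `f` obtained by fixing the `i`-th input to `a`. -/
def restrict {n : ℕ} (f : (Fin n → Bool) → ℝ) (i : Fin n) (a : Bool) :
    (Fin n → Bool) → ℝ :=
  fun x => f (Function.update x i a)

/-- Variable `i` is relevant for `f`. -/
def relevant {n : ℕ} (f : (Fin n → Bool) → ℝ) (i : Fin n) : Prop :=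
  ∃ x, f x ≠ f (Function.update x i (!(x i)))

/-- Number of relevant variables of `f`. -/
noncomputable def numRel {n : ℕ} (f : (Fin n → Bool) → ℝ) : ℕ :=
  Nat.card {i : Fin n // relevant f i}

/-- Influence `I_i(f) = Pr[f(X) ≠ f(X ⊕ e_i)]` for uniform `X`. -/
noncomputable def influence {n : ℕ} (f : (Fin n → Bool) → ℝ) (i : Fin n) : ℝ :=
  (Nat.card {x : Fin n → Bool // f x ≠ f (Function.update x i (!(x i)))} : ℝ) / 2 ^ n

/-- Average sensitivity `as(f) = ∑_i I_i(f)`. -/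
noncomputable def avgSens {n : ℕ} (f : (Fin n → Bool) → ℝ) : ℝ :=
  ∑ i : Fin n, influence f i

/-- `IsNCFwith f L` : `f` is a nested canalizing function with the nested canalizing
structure recorded by the list `L` of triples `(π(j), α_j, β_j)`: fixing variable
`π(j)` to its canalizing value `α_j` forces the output `β_j`, and the restriction to
the non-canalizing value continues with the rest of the list; the base case is a
constant (±1) function. -/
inductive IsNCFwith : {n : ℕ} → ((Fin n → Bool) → ℝ) → List (Fin n × Bool × ℝ) → Prop where
  | const {n : ℕ} (f : (Fin n → Bool) → ℝ) (b : ℝ) (hb : b = 1 ∨ b = -1)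
      (h : ∀ x, f x = b) : IsNCFwith f []
  | step {n : ℕ} (f : (Fin n → Bool) → ℝ) (i : Fin n) (a : Bool) (b : ℝ)
      (hb : b = 1 ∨ b = -1) (L : List (Fin n × Bool × ℝ))
      (hrel : relevant f i)
      (hcan : ∀ x, x i = a → f x = b)
      (hrest : IsNCFwith (restrict f i (!a)) L) :
      IsNCFwith f ((i, a, b) :: L)

/-- `f` is a nested canalizing function. -/
def IsNCF {n : ℕ} (f : (Fin n → Bool) → ℝ) : Prop := ∃ L, IsNCFwith f L

/-- Variable `i` is most dominant: some nested canalizing ordering starts with `i`. -/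
def MostDominant {n : ℕ} (f : (Fin n → Bool) → ℝ) (i : Fin n) : Prop :=
  ∃ a b L, IsNCFwith f ((i, a, b) :: L)

/-- The canalized output values `β_1, β_2, …` recorded in `L` alternate in sign. -/
def AltBetas {n : ℕ} (L : List (Fin n × Bool × ℝ)) : Prop :=
  List.Chain' (fun p q : Fin n × Bool × ℝ => q.2.2 = -p.2.2) L

open scoped Classical

lemma count_real {n : ℕ} (p : (Fin n → Bool) → Prop) :
    ((Nat.card {x : Fin n → Bool // p x}) : ℝ) = ∑ x : Fin n → Bool, if p x then (1:ℝ) else 0 := by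
  rw [Nat.card_eq_fintype_card, Fintype.card_subtype, Finset.sum_boole]

lemma bool_not_eq {c a : Bool} (h : ¬ c = a) : c = !a := by
  cases c <;> cases a <;> simp_all

lemma half_sum {n : ℕ} (h : (Fin n → Bool) → ℝ) (i : Fin n)
    (hinv : ∀ x c, h (Function.update x i c) = h x) (a : Bool) :
    ∑ x ∈ univ.filter (fun x => x i = a), h x = (∑ x : Fin n → Bool, h x) / 2 := by
  have hsplit := Finset.sum_filter_add_sum_filter_not univ (fun x => x i = a) h
  have heq : ∑ x ∈ univ.filter (fun x => ¬ x i = a), h x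
      = ∑ x ∈ univ.filter (fun x => x i = a), h x := by
    refine Finset.sum_bij' (fun x _ => Function.update x i a)
      (fun x _ => Function.update x i (!a)) ?_ ?_ ?_ ?_ ?_
    · intro x hx; simp
    · intro x hx; simp
    · intro x hx
      simp only [mem_filter, mem_univ, true_and] at hx
      rw [Function.update_idem, ← bool_not_eq hx, Function.update_eq_self]
    · intro x hx
      simp only [mem_filter, mem_univ, true_and] at hx
      rw [Function.update_idem, ← hx, Function.update_eq_self]
    · intro x hx; exact (hinv x a).symm
  linarith

lemma restrict_inv {n : ℕ} (f : (Fin n → Bool) → ℝ) (i : Fin n) (a : Bool)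
    (x : Fin n → Bool) (c : Bool) :
    _root_.restrict f i a (Function.update x i c) = _root_.restrict f i a x := by
  simp [_root_.restrict, Function.update_idem]

lemma restrict_eq_self {n : ℕ} (f : (Fin n → Bool) → ℝ) (i : Fin n) {a : Bool}
    {x : Fin n → Bool} (hx : x i = a) : _root_.restrict f i a x = f x := by
  rw [_root_.restrict, ← hx, Function.update_eq_self]

lemma ncf_boolean {n : ℕ} {f : (Fin n → Bool) → ℝ} {L : List (Fin n × Bool × ℝ)}
    (h : IsNCFwith f L) : IsBoolean f := by
  induction h with
  | const f b hb hconst => intro x; rw [hconst x]; exact hb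
  | step f i a b hb L hrel hcan hrest ih =>
    intro x
    by_cases hx : x i = a
    · rw [hcan x hx]; exact hb
    · have hx' : x i = !a := bool_not_eq hx
      have := ih x
      rwa [restrict_eq_self f i hx'] at this

lemma fhat_empty {n : ℕ} (f : (Fin n → Bool) → ℝ) :
    fhat f ∅ = (∑ x : Fin n → Bool, f x) / 2 ^ n := by
  simp [fhat, chi]

lemma card_cube (n : ℕ) : (Finset.univ : Finset (Fin n → Bool)).card = 2 ^ n := by
  simp [Finset.card_univ]

lemma abs_fhat_le_one {n : ℕ} {g : (Fin n → Bool) → ℝ} (hg : IsBoolean g) :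
    |fhat g ∅| ≤ 1 := by
  rw [fhat_empty, abs_div, abs_of_pos (by positivity : (0:ℝ) < 2 ^ n),
    div_le_one (by positivity)]
  calc |∑ x : Fin n → Bool, g x| ≤ ∑ x : Fin n → Bool, |g x| := Finset.abs_sum_le_sum_abs _ _
    _ = ∑ x : Fin n → Bool, 1 := by
        apply Finset.sum_congr rfl; intro x _
        rcases hg x with h | h <;> rw [h] <;> norm_num
    _ = 2 ^ n := by rw [Finset.sum_const, card_cube]; simp

lemma influence_eq {n : ℕ} (f : (Fin n → Bool) → ℝ) (j : Fin n) :
    influence f j = (∑ x : Fin n → Bool,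
      if f x ≠ f (Function.update x j (!(x j))) then (1:ℝ) else 0) / 2 ^ n := by
  rw [influence, count_real]; congr!

lemma influence_head {n : ℕ} (f : (Fin n → Bool) → ℝ) (i : Fin n) (a : Bool) (b : ℝ)
    (hb : b = 1 ∨ b = -1) (hcan : ∀ x, x i = a → f x = b)
    (hg : IsBoolean (_root_.restrict f i (!a))) :
    influence f i = (1 - b * fhat (_root_.restrict f i (!a)) ∅) / 2 := by
  set g := _root_.restrict f i (!a) with hgdef
  have key : ∀ x : Fin n → Bool,
      (f x ≠ f (Function.update x i (!(x i)))) ↔ g x ≠ b := by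
    intro x
    by_cases hx : x i = a
    · rw [hcan x hx, hx]
      have h0 : f (Function.update x i (!a)) = g x := rfl
      rw [h0]
      exact ne_comm
    · have hx' : x i = !a := bool_not_eq hx
      have h1 : f x = g x := (restrict_eq_self f i hx').symm
      have h2 : f (Function.update x i (!(x i))) = b := by
        apply hcan
        rw [Function.update_self, hx', Bool.not_not]
      rw [h1, h2]
  have hptw : ∀ x : Fin n → Bool,
      (if f x ≠ f (Function.update x i (!(x i))) then (1:ℝ) else 0) = (1 - b * g x) / 2 := by
    intro x
    rcases hg x with h | h <;> rcases hb with hb' | hb' <;>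
      simp only [key x, h, hb'] <;> norm_num
  rw [influence_eq, fhat_empty,
    Finset.sum_congr rfl (fun x _ => hptw x)]
  have hcard : ∑ x : Fin n → Bool, (1:ℝ) = 2 ^ n := by
    rw [Finset.sum_const, card_cube]; simp
  have hsum : ∑ x : Fin n → Bool, (1 - b * g x) / 2
      = (2 ^ n - b * ∑ x : Fin n → Bool, g x) / 2 := by
    rw [← Finset.sum_div, Finset.sum_sub_distrib, hcard, ← Finset.mul_sum]
  rw [hsum]
  have h2n : ((2:ℝ) ^ n) ≠ 0 := by positivity
  have hR : (1 - b * ((∑ x : Fin n → Bool, g x) / 2 ^ n))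
      = (2 ^ n - b * ∑ x : Fin n → Bool, g x) / 2 ^ n := by field_simp
  rw [hR]
  ring

lemma influence_other {n : ℕ} (f : (Fin n → Bool) → ℝ) (i j : Fin n) (hij : j ≠ i)
    (a : Bool) (b : ℝ) (hcan : ∀ x, x i = a → f x = b) :
    influence f j = influence (_root_.restrict f i (!a)) j / 2 := by
  set g := _root_.restrict f i (!a) with hgdef
  set q : (Fin n → Bool) → Prop := fun x => g x ≠ g (Function.update x j (!(x j))) with hq
  have hqinv : ∀ (x : Fin n → Bool) (c : Bool), q (Function.update x i c) ↔ q x := by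
    intro x c
    have h1 : g (Function.update x i c) = g x := restrict_inv f i (!a) x c
    have h2 : Function.update x i c j = x j := Function.update_of_ne hij _ _
    have h3 : Function.update (Function.update x i c) j (!(x j))
        = Function.update (Function.update x j (!(x j))) i c :=
      Function.update_comm (Ne.symm hij) _ _ _
    have h4 : g (Function.update (Function.update x j (!(x j))) i c)
        = g (Function.update x j (!(x j))) := restrict_inv f i (!a) _ c
    simp only [hq, h2, h1, h3, h4]
  have key : ∀ x : Fin n → Bool,
      (f x ≠ f (Function.update x j (!(x j)))) ↔ (x i = !a ∧ q x) := by
    intro x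
    by_cases hx : x i = a
    · have h1 : f x = b := hcan x hx
      have h2 : f (Function.update x j (!(x j))) = b := by
        apply hcan
        rw [Function.update_of_ne (Ne.symm hij)]
        exact hx
      have h3 : ¬ (x i = !a) := by rw [hx]; cases a <;> simp
      simp [h1, h2, h3]
    · have hx' : x i = !a := bool_not_eq hx
      have h1 : f x = g x := (restrict_eq_self f i hx').symm
      have h2 : f (Function.update x j (!(x j))) = g (Function.update x j (!(x j))) := by
        refine (restrict_eq_self f i ?_).symm
        rw [Function.update_of_ne (Ne.symm hij)]
        exact hx'
      simp [h1, h2, hx', hq]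
  rw [influence_eq, influence_eq,
    Finset.sum_congr rfl (fun x _ => if_congr (key x) rfl rfl)]
  have hsplit : ∑ x : Fin n → Bool, (if x i = !a ∧ q x then (1:ℝ) else 0)
      = ∑ x ∈ Finset.univ.filter (fun x => x i = !a), (if q x then (1:ℝ) else 0) := by
    rw [Finset.sum_filter]
    exact Finset.sum_congr rfl (fun x _ => by rw [ite_and])
  rw [hsplit, half_sum (fun x => if q x then (1:ℝ) else 0) i
    (fun x c => if_congr (hqinv x c) rfl rfl) (!a)]
  ring

lemma fhat_head {n : ℕ} (f : (Fin n → Bool) → ℝ) (i : Fin n) (a : Bool) (b : ℝ)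
    (hcan : ∀ x, x i = a → f x = b) :
    fhat f ∅ = (b + fhat (_root_.restrict f i (!a)) ∅) / 2 := by
  set g := _root_.restrict f i (!a) with hgdef
  have key : ∀ x : Fin n → Bool,
      f x = (if x i = a then b else 0) + (if x i = !a then g x else 0) := by
    intro x
    by_cases hx : x i = a
    · have h3 : ¬ (x i = !a) := by rw [hx]; cases a <;> simp
      simp [hx, h3, hcan x hx]
    · have hx' : x i = !a := bool_not_eq hx
      simp [hx, hx', (restrict_eq_self f i hx').symm]
      rfl
  rw [fhat_empty, fhat_empty,
    Finset.sum_congr rfl (fun x _ => key x), Finset.sum_add_distrib]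
  have h1 : ∑ x : Fin n → Bool, (if x i = a then b else 0)
      = (∑ _x : Fin n → Bool, b) / 2 := by
    rw [← half_sum (fun _ => b) i (fun _ _ => rfl) a, Finset.sum_filter]
  have h2 : ∑ x : Fin n → Bool, (if x i = !a then g x else 0)
      = (∑ x : Fin n → Bool, g x) / 2 := by
    rw [← half_sum g i (restrict_inv f i (!a)) (!a), Finset.sum_filter]
  have hb : ∑ _x : Fin n → Bool, b = 2 ^ n * b := by
    rw [Finset.sum_const, card_cube]; simp
  rw [h1, h2, hb]
  have h2n : ((2:ℝ) ^ n) ≠ 0 := by positivity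
  field_simp

lemma influence_restrict_self {n : ℕ} (f : (Fin n → Bool) → ℝ) (i : Fin n) (a : Bool) :
    influence (_root_.restrict f i a) i = 0 := by
  rw [influence_eq]
  have : ∀ x : Fin n → Bool, (if _root_.restrict f i a x ≠
      _root_.restrict f i a (Function.update x i (!(x i))) then (1:ℝ) else 0) = 0 := by
    intro x
    rw [if_neg]
    simp [restrict_inv f i a x (!(x i))]
  rw [Finset.sum_congr rfl (fun x _ => this x)]
  simp

lemma avgSens_decomp {n : ℕ} (f : (Fin n → Bool) → ℝ) (i : Fin n) (a : Bool) (b : ℝ)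
    (hb : b = 1 ∨ b = -1) (hcan : ∀ x, x i = a → f x = b)
    (hg : IsBoolean (_root_.restrict f i (!a))) :
    avgSens f = (1 - b * fhat (_root_.restrict f i (!a)) ∅) / 2
      + avgSens (_root_.restrict f i (!a)) / 2 := by
  set g := _root_.restrict f i (!a) with hgdef
  have hsplitf : avgSens f = influence f i + ∑ j ∈ Finset.univ.erase i, influence f j :=
    (Finset.add_sum_erase Finset.univ (influence f) (Finset.mem_univ i)).symm
  have hsplitg : avgSens g = influence g i + ∑ j ∈ Finset.univ.erase i, influence g j :=
    (Finset.add_sum_erase Finset.univ (influence g) (Finset.mem_univ i)).symm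
  have hgi : influence g i = 0 := influence_restrict_self f i (!a)
  have hothers : ∑ j ∈ Finset.univ.erase i, influence f j
      = ∑ j ∈ Finset.univ.erase i, influence g j / 2 := by
    refine Finset.sum_congr rfl (fun j hj => ?_)
    exact influence_other f i j (Finset.ne_of_mem_erase hj) a b hcan
  rw [hsplitf, hothers, influence_head f i a b hb hcan hg]
  rw [hsplitg, hgi, ← Finset.sum_div]
  ring

lemma avgSens_const {n : ℕ} (f : (Fin n → Bool) → ℝ) (b : ℝ) (h : ∀ x, f x = b) :
    avgSens f = 0 := by
  rw [avgSens]
  refine Finset.sum_eq_zero (fun j _ => ?_)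
  rw [influence_eq]
  have : ∀ x : Fin n → Bool,
      (if f x ≠ f (Function.update x j (!(x j))) then (1:ℝ) else 0) = 0 := by
    intro x
    rw [if_neg]
    simp [h x, h (Function.update x j (!(x j)))]
  rw [Finset.sum_congr rfl (fun x _ => this x)]
  simp

lemma fhat_const {n : ℕ} (f : (Fin n → Bool) → ℝ) (b : ℝ) (h : ∀ x, f x = b) :
    fhat f ∅ = b := by
  rw [fhat_empty, Finset.sum_congr rfl (fun x _ => h x), Finset.sum_const, card_cube]
  have h2n : ((2:ℝ) ^ n) ≠ 0 := by positivity
  field_simp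
  simp [nsmul_eq_mul]

lemma ncf_both {n : ℕ} {f : (Fin n → Bool) → ℝ} {L : List (Fin n × Bool × ℝ)}
    (h : IsNCFwith f L) :
    avgSens f ≤ 4 / 3 ∧ avgSens f + |fhat f ∅| ≤ 5 / 3 := by
  induction h with
  | const f b hb hconst =>
    rw [avgSens_const f b hconst, fhat_const f b hconst]
    rcases hb with hb | hb <;> rw [hb] <;> norm_num
  | step f i a b hb L hrel hcan hrest ih =>
    have hgB : IsBoolean (_root_.restrict f i (!a)) := ncf_boolean hrest
    set g := _root_.restrict f i (!a) with hgdef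
    set c := fhat g ∅ with hc
    have hcle : |c| ≤ 1 := abs_fhat_le_one hgB
    have hasf : avgSens f = (1 - b * c) / 2 + avgSens g / 2 :=
      avgSens_decomp f i a b hb hcan hgB
    have hfh : fhat f ∅ = (b + c) / 2 := fhat_head f i a b hcan
    have hbc : |b * c| = |c| := by
      rcases hb with hb' | hb' <;> rw [hb'] <;> simp
    have hbc' : -(|c|) ≤ b * c := by
      have h1 := neg_abs_le (b * c)
      linarith [hbc.ge]
    constructor
    · -- avgSens f ≤ 4/3 using ih.2
      have := ih.2
      rw [hasf]
      linarith
    · -- avgSens f + |fhat f ∅| ≤ 5/3 using ih.1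
      have hkey : (1 - b * c) + |b + c| = 2 := by
        have hc1 := abs_le.mp hcle
        rcases hb with hb' | hb' <;> rw [hb']
        · rw [abs_of_nonneg (by linarith : (0:ℝ) ≤ 1 + c)]; ring
        · rw [show (-1:ℝ) + c = -(1 - c) by ring, abs_neg,
            abs_of_nonneg (by linarith : (0:ℝ) ≤ 1 - c)]
          ring
      have := ih.1
      rw [hasf, hfh, abs_div]
      rw [abs_of_pos (by norm_num : (0:ℝ) < 2)]
      linarith

/-- For any NCF `f`, `as(f) ≤ 5/3 - |f̂(∅)|`. -/
theorem avgSens_ncf_le {n : ℕ} (f : (Fin n → Bool) → ℝ) (hf : IsNCF f) :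
    avgSens f ≤ 5 / 3 - |fhat f ∅| := by
  obtain ⟨L, hL⟩ := hf
  linarith [(ncf_both hL).2]
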